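/- Let C be a locally presentable category and let D ⊆ C be a reflective full subcategory such that the inclusion functor D → C preserves κ-filtered colimits for some regular cardinal κ. Then D is locally presentable. -/

import Mathlib

open CategoryTheory CategoryTheory.Limits

universe v u u'

/-- A category `A` is `κ`-small if its sets of objects and of morphisms have
cardinality `< κ`. -/
def IsCardinalSmallCat (A : Type v) [SmallCategory A] (κ : Cardinal.{v}) : Prop :=
  Cardinal.mk A < κ ∧ Cardinal.mk (Σ (X : A) (Y : A), X ⟶ Y) < κ

/-- A category `J` is `κ`-filtered if every diagram indexed by a `κ`-small category
admits a cocone. -/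
def IsCardinalFilteredCat (J : Type v) [SmallCategory J] (κ : Cardinal.{v}) : Prop :=
  ∀ (A : Type v) [SmallCategory A], IsCardinalSmallCat A κ →
    ∀ D : A ⥤ J, Nonempty (Cocone D)

/-- An object `c` of `C` is `κ`-presentable (`κ`-compact) if the functor
`Hom_C(c, −) : C ⥤ Type` preserves colimits of `κ`-filtered diagrams. -/
def IsCardinalPresentableObj {C : Type u} [Category.{v} C] (c : C) (κ : Cardinal.{v}) :
    Prop :=
  ∀ (J : Type v) [SmallCategory J], IsCardinalFilteredCat J κ →
    ∀ (D : J ⥤ C) (cc : Cocone D), Nonempty (IsColimit cc) →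
      Nonempty (IsColimit ((coyoneda.obj (Opposite.op c)).mapCocone cc))

/-- A category `C` is locally presentable if it is cocomplete and accessible: there is a
regular cardinal `κ` and a set (small family) of `κ`-presentable objects such that every
object of `C` is a `κ`-filtered colimit of objects of the family. -/
def IsLocallyPresentableCat (C : Type u) [Category.{v} C] : Prop :=
  HasColimitsOfSize.{v, v} C ∧
    ∃ κ : Cardinal.{v}, κ.IsRegular ∧
      ∃ (ι : Type v) (G : ι → C),
        (∀ i, IsCardinalPresentableObj (G i) κ) ∧
        ∀ X : C, ∃ (J : Cat.{v, v}) (D : J ⥤ C) (cc : Cocone D),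
          IsCardinalFilteredCat J κ ∧ (∀ j : J, D.obj j ∈ Set.range G) ∧
          Nonempty (IsColimit cc) ∧ Nonempty (cc.pt ≅ X)

namespace LPAux

open Cardinal

lemma small_mono {A : Type v} [SmallCategory A] {μ lam : Cardinal.{v}} (h : μ ≤ lam) :
    IsCardinalSmallCat A μ → IsCardinalSmallCat A lam :=
  fun ⟨h1, h2⟩ => ⟨h1.trans_le h, h2.trans_le h⟩

lemma filt_anti {J : Type v} [SmallCategory J] {μ lam : Cardinal.{v}} (h : μ ≤ lam) :
    IsCardinalFilteredCat J lam → IsCardinalFilteredCat J μ :=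
  fun hf A _ hA => hf A (small_mono h hA)

lemma pres_mono {C : Type u} [Category.{v} C] {c : C} {μ lam : Cardinal.{v}} (h : μ ≤ lam) :
    IsCardinalPresentableObj c μ → IsCardinalPresentableObj c lam :=
  fun hp J _ hJ => hp J (filt_anti h hJ)

section Paths

variable {V : Type v} [Quiver.{v} V]

def pathToList : ∀ {a b : V}, Quiver.Path a b → List (Σ x y : V, x ⟶ y)
  | _, _, .nil => []
  | _, _, .cons p e => ⟨_, _, e⟩ :: pathToList p

lemma pathToList_inj : ∀ {a b b' : V} (p : Quiver.Path a b) (p' : Quiver.Path a b'),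
    pathToList p = pathToList p' → b = b' ∧ HEq p p' := by
  intro a b b' p p' h
  induction p generalizing b' p' with
  | nil =>
    cases p' with
    | nil => exact ⟨rfl, .rfl⟩
    | cons q e => simp [pathToList] at h
  | cons q e ih =>
    cases p' with
    | nil => simp [pathToList] at h
    | cons q' e' =>
      simp only [pathToList, List.cons.injEq] at h
      obtain ⟨h1, h2⟩ := h
      obtain ⟨hc, h1⟩ := Sigma.mk.inj_iff.mp h1
      subst hc
      obtain ⟨hb, h1⟩ := Sigma.mk.inj_iff.mp (eq_of_heq h1)
      subst hb
      obtain ⟨-, hq⟩ := ih q' h2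
      exact ⟨rfl, heq_of_eq (by rw [eq_of_heq hq, eq_of_heq h1])⟩

lemma mk_paths_lt {lam : Cardinal.{v}} (hreg : lam.IsRegular) (hℵ : ℵ₀ < lam)
    (hV : #V < lam) (hE : #(Σ x y : V, x ⟶ y) < lam) :
    #(Σ a b : V, Quiver.Path a b) < lam := by
  have hinj : Function.Injective
      (fun t : Σ a b : V, Quiver.Path a b => (t.1, t.2.1, pathToList t.2.2)) := by
    rintro ⟨a, b, p⟩ ⟨a', b', p'⟩ h
    simp only [Prod.mk.injEq] at h
    obtain ⟨ha, hb, hl⟩ := h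
    subst ha; subst hb
    obtain ⟨-, hp⟩ := pathToList_inj p p' hl
    simp [eq_of_heq hp]
  have h1 : #(Σ a b : V, Quiver.Path a b) ≤ #(V × V × List (Σ x y : V, x ⟶ y)) :=
    mk_le_of_injective hinj
  refine h1.trans_lt ?_
  have hlist : #(List (Σ x y : V, x ⟶ y)) < lam := by
    refine (mk_list_le_max _).trans_lt ?_
    exact max_lt hℵ hE
  simp only [mk_prod, lift_id]
  exact mul_lt_of_lt hreg.aleph0_le hV (mul_lt_of_lt hreg.aleph0_le hV hlist)

/-- Smallness of the path category of a small quiver. -/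
lemma smallCat_paths {lam : Cardinal.{v}} (hreg : lam.IsRegular) (hℵ : ℵ₀ < lam)
    (hV : #V < lam) (hE : #(Σ x y : V, x ⟶ y) < lam) :
    IsCardinalSmallCat (Paths V) lam :=
  ⟨hV, mk_paths_lt (V := V) hreg hℵ hV hE⟩

end Paths

section Star

variable {J : Type v} [SmallCategory J]

def starHom (α : Type v) (β : α → Type v) : Option α → Option α → Type v
  | none, some a => β a
  | _, _ => PEmpty

lemma nonempty_of_filt {lam : Cardinal.{v}} (hJ : IsCardinalFilteredCat J lam)
    (hreg : lam.IsRegular) (hℵ : ℵ₀ < lam) : Nonempty J := by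
  letI : Quiver.{v} PEmpty.{v+1} := ⟨fun _ _ => PEmpty⟩
  let φ : PEmpty.{v+1} ⥤q J := ⟨PEmpty.elim, fun {x} => x.elim⟩
  have h0 : #PEmpty.{v+1} < lam := by simpa using hreg.pos
  have hE : #(Σ x y : PEmpty.{v+1}, x ⟶ y) < lam := by
    refine lt_of_le_of_lt (mk_le_of_injective (f := fun t : Σ x y : PEmpty.{v+1}, x ⟶ y => t.1) ?_) h0
    rintro ⟨x, -, -⟩
    exact x.elim
  obtain ⟨cone⟩ := hJ _ (smallCat_paths hreg hℵ h0 hE) (Paths.lift φ)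
  exact ⟨cone.pt⟩

lemma exists_star {lam : Cardinal.{v}} (hJ : IsCardinalFilteredCat J lam)
    (hreg : lam.IsRegular) (hℵ : ℵ₀ < lam) {α : Type v} {β : α → Type v}
    (hα : #α < lam) (hβ : #(Σ a, β a) < lam)
    (j₀ : J) (ja : α → J) (u : ∀ a, β a → (j₀ ⟶ ja a)) :
    ∃ (k : J) (ℓ₀ : j₀ ⟶ k) (ℓ : ∀ a, ja a ⟶ k), ∀ a e, u a e ≫ ℓ a = ℓ₀ := by
  letI : Quiver.{v} (Option α) := ⟨starHom α β⟩
  let φ : Option α ⥤q J :=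
    { obj := fun x => match x with
        | none => j₀
        | some a => ja a
      map := fun {x y} e => match x, y, e with
        | none, some a, e => u a e }
  have hV : #(Option α) < lam := by
    rw [mk_option]
    exact add_lt_of_lt hreg.aleph0_le hα (lt_of_le_of_lt one_le_aleph0 hℵ)
  have hE : #(Σ x y : Option α, x ⟶ y) < lam := by
    refine lt_of_le_of_lt (mk_le_of_injective
      (f := fun t : Σ x y : Option α, x ⟶ y =>
        (show ∀ x y : Option α, (x ⟶ y) → Σ a, β a from
          fun x y => match x, y with
          | none, some a => fun e => ⟨a, e⟩
          | none, none => fun e => e.elim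
          | some _, none => fun e => e.elim
          | some _, some _ => fun e => e.elim) t.1 t.2.1 t.2.2) ?_) hβ
    rintro ⟨x, y, e⟩ ⟨x', y', e'⟩ h
    match x, y, e, x', y', e' with
    | none, some a, e, none, some a', e' =>
      simp only [Sigma.mk.inj_iff] at h
      obtain ⟨rfl, h⟩ := h
      rfl
  obtain ⟨cone⟩ := hJ _ (smallCat_paths hreg hℵ hV hE) (Paths.lift φ)
  refine ⟨cone.pt, cone.ι.app (none : Option α), fun a => cone.ι.app (some a), ?_⟩
  intro a e
  have := cone.w (Quiver.Hom.toPath (show (none : Option α) ⟶ some a from e))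
  rw [Paths.lift_toPath] at this
  exact this

/-- upper bound for a small family of objects -/
lemma exists_upper {lam : Cardinal.{v}} (hJ : IsCardinalFilteredCat J lam)
    (hreg : lam.IsRegular) (hℵ : ℵ₀ < lam) {α : Type v} (hα : #α < lam)
    (ja : α → J) : ∃ (k : J) (_ : ∀ a, ja a ⟶ k), True := by
  obtain ⟨j₀⟩ := nonempty_of_filt hJ hreg hℵ
  obtain ⟨k, ℓ₀, ℓ, -⟩ := exists_star hJ hreg hℵ (β := fun _ => PEmpty) hα
    (by
      refine lt_of_le_of_lt (mk_le_of_injective (f := fun t : Σ _ : α, PEmpty.{v+1} => t.2) ?_) ?_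
      · rintro ⟨a, e⟩; exact e.elim
      · simpa using hreg.pos)
    j₀ ja (fun _ e => e.elim)
  exact ⟨k, ℓ, trivial⟩

lemma isFiltered_of_filt {lam : Cardinal.{v}} (hJ : IsCardinalFilteredCat J lam)
    (hreg : lam.IsRegular) (hℵ : ℵ₀ < lam) : IsFiltered J := by
  have hb : #(ULift.{v} Bool) < lam := lt_of_le_of_lt (by simpa using (lt_aleph0_of_finite (ULift Bool)).le) hℵ
  have hpu : #(PUnit.{v+1}) < lam := lt_of_le_of_lt (by simpa using (lt_aleph0_of_finite PUnit).le) hℵ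
  haveI : Nonempty J := nonempty_of_filt hJ hreg hℵ
  haveI : IsFilteredOrEmpty J := by
    constructor
    · intro X Y
      obtain ⟨k, ℓ, -⟩ := exists_upper hJ hreg hℵ hb (fun b => cond b.down X Y)
      exact ⟨k, ℓ ⟨true⟩, ℓ ⟨false⟩, trivial⟩
    · intro X Y f g
      obtain ⟨k, ℓ₀, ℓ, hw⟩ := exists_star hJ hreg hℵ (β := fun _ : PUnit.{v+1} => ULift.{v} Bool) hpu
        (by
          refine lt_of_le_of_lt (mk_le_of_injective (f := fun t : Σ _ : PUnit.{v+1}, ULift.{v} Bool => t.2) ?_) hb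
          rintro ⟨⟨⟩, e⟩ ⟨⟨⟩, e'⟩ h
          simp_all)
        X (fun _ => Y) (fun _ e => cond e.down f g)
      refine ⟨k, ℓ PUnit.unit, ?_⟩
      have h1 := hw PUnit.unit ⟨true⟩
      have h2 := hw PUnit.unit ⟨false⟩
      simp only [cond] at h1 h2
      rw [h1, h2]
  exact ⟨⟩

end Star

section Pres

variable {C : Type u} [Category.{v} C]

lemma mapped_app {c : C} {J : Type v} [SmallCategory J] {E : J ⥤ C} (cc : Cocone E)
    (j : J) (y : c ⟶ E.obj j) :
    ((coyoneda.obj (Opposite.op c)).mapCocone cc).ι.app j y = y ≫ cc.ι.app j := rfl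

lemma pres_fac {c : C} {lam : Cardinal.{v}} (hc : IsCardinalPresentableObj c lam)
    {J : Type v} [SmallCategory J] (hJ : IsCardinalFilteredCat J lam)
    {E : J ⥤ C} {cc : Cocone E} (hcc : IsColimit cc) (f : c ⟶ cc.pt) :
    ∃ (j : J) (g : c ⟶ E.obj j), g ≫ cc.ι.app j = f := by
  obtain ⟨h⟩ := hc J hJ E cc ⟨hcc⟩
  obtain ⟨j, y, hy⟩ := Types.jointly_surjective _ h f
  exact ⟨j, y, hy⟩

lemma pres_eq {c : C} {lam : Cardinal.{v}} (hc : IsCardinalPresentableObj c lam)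
    {J : Type v} [SmallCategory J] [IsFilteredOrEmpty J] (hJ : IsCardinalFilteredCat J lam)
    {E : J ⥤ C} {cc : Cocone E} (hcc : IsColimit cc) {j : J} (x y : c ⟶ E.obj j)
    (h : x ≫ cc.ι.app j = y ≫ cc.ι.app j) :
    ∃ (k : J) (f g : j ⟶ k), x ≫ E.map f = y ≫ E.map g := by
  obtain ⟨hco⟩ := hc J hJ E cc ⟨hcc⟩
  have := (Types.FilteredColimit.isColimit_eq_iff (E ⋙ coyoneda.obj (Opposite.op c)) hco
    (i := j) (j := j) (xi := x) (xj := y)).mp h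
  obtain ⟨k, f, g, hfg⟩ := this
  exact ⟨k, f, g, hfg⟩

/-- A `lam`-small colimit of `lam`-presentable objects is `lam`-presentable. -/
theorem pres_of_colimit_small {lam : Cardinal.{v}} (hreg : lam.IsRegular) (hℵ : ℵ₀ < lam)
    {B : Type v} [SmallCategory B] (hB : IsCardinalSmallCat B lam)
    {F : B ⥤ C} {t : Cocone F} (ht : IsColimit t)
    (hFb : ∀ b, IsCardinalPresentableObj (F.obj b) lam) :
    IsCardinalPresentableObj t.pt lam := by
  intro J instJ hJ E cc hcc'
  obtain ⟨hcc⟩ := hcc'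
  haveI : IsFiltered J := isFiltered_of_filt hJ hreg hℵ
  refine ⟨Types.FilteredColimit.isColimitOf _ _ ?_ ?_⟩
  · -- joint surjectivity
    intro f
    choose jb gb hgb using fun b => pres_fac (hFb b) hJ hcc (t.ι.app b ≫ f)
    obtain ⟨j₀, ℓ, -⟩ := exists_upper hJ hreg hℵ hB.1 jb
    have hbool : #(ULift.{v} Bool) < lam := (lt_aleph0_of_finite _).trans hℵ
    let g' : ∀ b, F.obj b ⟶ E.obj j₀ := fun b => gb b ≫ E.map (ℓ b)
    have hg'w : ∀ b, g' b ≫ cc.ι.app j₀ = t.ι.app b ≫ f := by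
      intro b
      show (gb b ≫ E.map (ℓ b)) ≫ cc.ι.app j₀ = t.ι.app b ≫ f
      rw [Category.assoc, cc.w, hgb]
    have key : ∀ m : Σ b b' : B, b ⟶ b',
        (F.map m.2.2 ≫ g' m.2.1) ≫ cc.ι.app j₀ = g' m.1 ≫ cc.ι.app j₀ := by
      rintro ⟨b, b', u⟩
      rw [Category.assoc, hg'w, hg'w, ← Category.assoc, t.w]
    choose km um u'm hum using fun m => pres_eq (hFb m.1) hJ hcc _ _ (key m)
    obtain ⟨k, ℓ₀, ℓm, hw⟩ := exists_star hJ hreg hℵ hB.2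
      (β := fun _ : Σ b b' : B, b ⟶ b' => ULift.{v} Bool)
      (by
        rw [mk_congr (Equiv.sigmaEquivProd _ _), mk_prod, lift_id, lift_id]
        exact mul_lt_of_lt hreg.aleph0_le hB.2 hbool)
      j₀ km (fun m e => cond e.down (um m) (u'm m))
    have hcone : ∀ m : Σ b b' : B, b ⟶ b',
        F.map m.2.2 ≫ (g' m.2.1 ≫ E.map ℓ₀) = g' m.1 ≫ E.map ℓ₀ := by
      intro m
      have h1 := hw m ⟨true⟩
      have h2 := hw m ⟨false⟩
      simp only [cond] at h1 h2
      calc F.map m.2.2 ≫ g' m.2.1 ≫ E.map ℓ₀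
          = (F.map m.2.2 ≫ g' m.2.1) ≫ E.map (um m) ≫ E.map (ℓm m) := by
            rw [← E.map_comp, h1]; simp only [Category.assoc]
        _ = (g' m.1 ≫ E.map (u'm m)) ≫ E.map (ℓm m) := by
            rw [← Category.assoc, hum m]
        _ = g' m.1 ≫ E.map ℓ₀ := by
            rw [Category.assoc, ← E.map_comp, h2]
    let s : Cocone F :=
      { pt := E.obj k
        ι := { app := fun b => g' b ≫ E.map ℓ₀
               naturality := fun b b' u => by
                 simpa using hcone ⟨b, b', u⟩ } }
    refine ⟨k, ht.desc s, ?_⟩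
    rw [mapped_app]
    refine ht.hom_ext fun b => ?_
    rw [← Category.assoc, ht.fac s b]
    show t.ι.app b ≫ f = (g' b ≫ E.map ℓ₀) ≫ cc.ι.app k
    rw [Category.assoc, cc.w, hg'w]
  · -- eventual equality
    intro j j' x x' hxx
    rw [mapped_app, mapped_app] at hxx
    obtain ⟨k₀, α₁, α₂, -⟩ := IsFilteredOrEmpty.cocone_objs j j'
    have hxx' : (x ≫ E.map α₁) ≫ cc.ι.app k₀ = (x' ≫ E.map α₂) ≫ cc.ι.app k₀ := by
      rw [Category.assoc, Category.assoc, cc.w, cc.w, hxx]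
    have hbool : #(ULift.{v} Bool) < lam := (lt_aleph0_of_finite _).trans hℵ
    choose kb ub u'b hub using fun b =>
      pres_eq (hFb b) hJ hcc (t.ι.app b ≫ x ≫ E.map α₁) (t.ι.app b ≫ x' ≫ E.map α₂)
        (by simp only [Category.assoc]
            simp only [Category.assoc] at hxx'
            rw [hxx'])
    obtain ⟨k, ℓ₀, ℓb, hw⟩ := exists_star hJ hreg hℵ hB.1
      (β := fun _ : B => ULift.{v} Bool)
      (by
        rw [mk_congr (Equiv.sigmaEquivProd _ _), mk_prod, lift_id, lift_id]
        exact mul_lt_of_lt hreg.aleph0_le hB.1 hbool)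
      k₀ kb (fun b e => cond e.down (ub b) (u'b b))
    refine ⟨k, α₁ ≫ ℓ₀, α₂ ≫ ℓ₀, ?_⟩
    show x ≫ E.map (α₁ ≫ ℓ₀) = x' ≫ E.map (α₂ ≫ ℓ₀)
    have key2 : (x ≫ E.map α₁) ≫ E.map ℓ₀ = (x' ≫ E.map α₂) ≫ E.map ℓ₀ := by
      refine ht.hom_ext fun b => ?_
      have h1 := hw b ⟨true⟩
      have h2 := hw b ⟨false⟩
      simp only [cond] at h1 h2
      calc t.ι.app b ≫ (x ≫ E.map α₁) ≫ E.map ℓ₀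
          = (t.ι.app b ≫ x ≫ E.map α₁) ≫ E.map (ub b) ≫ E.map (ℓb b) := by
            rw [← E.map_comp, h1]; simp only [Category.assoc]
        _ = ((t.ι.app b ≫ x' ≫ E.map α₂) ≫ E.map (u'b b)) ≫ E.map (ℓb b) := by
            rw [← Category.assoc, hub b]
        _ = t.ι.app b ≫ (x' ≫ E.map α₂) ≫ E.map ℓ₀ := by
            rw [Category.assoc, ← E.map_comp, h2]; simp only [Category.assoc]
    simpa [E.map_comp] using key2
  

end Pres

section QDsec

variable {C : Type u} [Category.{v} C]
variable (W ι₀ : Type v) (G : ι₀ → C) (lam : Cardinal.{v})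

/-- A `lam`-small quiver with vertices and edges drawn from `W`, labelled by generators. -/
structure QD : Type v where
  O : Set W
  E : Set W
  src : E → O
  tgt : E → O
  Fo : O → ι₀
  Fe : ∀ e : E, G (Fo (src e)) ⟶ G (Fo (tgt e))
  smallO : Cardinal.mk O < lam
  smallE : Cardinal.mk E < lam

variable {W ι₀ G lam}

namespace QD

variable (q : QD W ι₀ G lam)

def Vq := ↥q.O

instance quiverVq : Quiver.{v} q.Vq :=
  ⟨fun a b => {e : ↥q.E // q.src e = a ∧ q.tgt e = b}⟩

def pf : q.Vq ⥤q C where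
  obj a := G (q.Fo a)
  map {a b} e :=
    eqToHom (congrArg (fun o => G (q.Fo o)) e.2.1.symm) ≫ q.Fe e.1 ≫
      eqToHom (congrArg (fun o => G (q.Fo o)) e.2.2)

def Fq : Paths q.Vq ⥤ C := Paths.lift q.pf

lemma Fq_obj (a : q.Vq) : q.Fq.obj a = G (q.Fo a) := rfl

lemma Fq_map_nil (a : q.Vq) :
    q.Fq.map (Quiver.Path.nil : Quiver.Path a a) = 𝟙 (G (q.Fo a)) :=
  Paths.lift_nil q.pf a

lemma Fq_map_cons {a b c : q.Vq} (p : Quiver.Path a b)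
    (e : @Quiver.Hom q.Vq (quiverVq q) b c) :
    q.Fq.map (Quiver.Path.cons p e) = q.Fq.map p ≫ q.pf.map e :=
  Paths.lift_cons q.pf p e

variable [HasColimitsOfSize.{v, v} C]

noncomputable def colim : C := colimit q.Fq

noncomputable def ci (a : ↥q.O) : G (q.Fo a) ⟶ q.colim := colimit.ι q.Fq a

lemma fe_w (e : ↥q.E) : q.Fe e ≫ q.ci (q.tgt e) = q.ci (q.src e) := by
  have h := colimit.w q.Fq
    (@Quiver.Path.cons q.Vq (quiverVq q) _ _ _ Quiver.Path.nil ⟨e, rfl, rfl⟩)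
  erw [Fq_map_cons, Fq_map_nil] at h
  have h2 : (𝟙 (G (q.Fo (q.src e))) ≫ q.pf.map ⟨e, rfl, rfl⟩) ≫ q.ci (q.tgt e) =
      q.ci (q.src e) := h
  erw [Category.id_comp] at h2
  simpa [pf] using h2

lemma chom_ext {Z : C} {f g : q.colim ⟶ Z} (h : ∀ a, q.ci a ≫ f = q.ci a ≫ g) :
    f = g :=
  colimit.hom_ext (fun a => h a)

noncomputable def cdesc {Z : C} (ℓ : ∀ a, G (q.Fo a) ⟶ Z)
    (hnat : ∀ e : ↥q.E, q.Fe e ≫ ℓ (q.tgt e) = ℓ (q.src e)) : q.colim ⟶ Z :=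
  colimit.desc q.Fq
    { pt := Z
      ι :=
        { app := ℓ
          naturality := by
            intro a b p
            simp only [Functor.const_obj_map, Category.comp_id]
            induction p using Quiver.Path.rec with
            | nil =>
              erw [Fq_map_nil]
              exact (Category.id_comp (ℓ a)).trans (Category.comp_id (ℓ a)).symm
            | cons p' e ih =>
              erw [Fq_map_cons, Category.assoc]
              obtain ⟨e₀, rfl, rfl⟩ := e
              have : q.pf.map (⟨e₀, rfl, rfl⟩ :
                    @Quiver.Hom q.Vq (quiverVq q) (q.src e₀) (q.tgt e₀)) ≫ ℓ (q.tgt e₀)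
                  = ℓ (q.src e₀) := by
                simpa [pf] using hnat e₀
              erw [this]
              exact ih } }

lemma ci_cdesc {Z : C} (ℓ : ∀ a, G (q.Fo a) ⟶ Z) (hnat) (a : ↥q.O) :
    q.ci a ≫ q.cdesc ℓ hnat = ℓ a :=
  colimit.ι_desc _ _

lemma ci_congr {a a' : ↥q.O} (h : a = a') :
    q.ci a = eqToHom (by rw [h]) ≫ q.ci a' := by
  subst h; simp

lemma small_paths (hreg : lam.IsRegular) (hℵ : Cardinal.aleph0 < lam) :
    IsCardinalSmallCat (Paths q.Vq) lam := by
  refine smallCat_paths hreg hℵ q.smallO ?_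
  refine lt_of_le_of_lt (Cardinal.mk_le_of_injective
    (f := fun t : Σ a b : q.Vq, a ⟶ b => (t.2.2.1 : ↥q.E)) ?_) q.smallE
  rintro ⟨a, b, e, rfl, rfl⟩ ⟨a', b', e', h1, h2⟩ h
  cases h
  cases h1
  cases h2
  rfl

lemma pres (hreg : lam.IsRegular) (hℵ : Cardinal.aleph0 < lam)
    (hGi : ∀ i, IsCardinalPresentableObj (G i) lam) :
    IsCardinalPresentableObj q.colim lam :=
  pres_of_colimit_small hreg hℵ (q.small_paths hreg hℵ) (colimit.isColimit q.Fq)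
    (fun a => hGi (q.Fo a))

end QD

end QDsec

section SubCatSec

open Cardinal

variable {J₀ : Type v} [SmallCategory J₀] {lam : Cardinal.{v}}

/-- A small subcategory of `J₀`: a set of objects and a set of morphisms closed under
identities and composition. -/
structure SubCat (J₀ : Type v) [SmallCategory J₀] (lam : Cardinal.{v}) : Type v where
  obj : Set J₀
  mor : Set (Σ j j' : J₀, j ⟶ j')
  src_mem : ∀ m ∈ mor, m.1 ∈ obj
  tgt_mem : ∀ m ∈ mor, m.2.1 ∈ obj
  id_mem : ∀ j ∈ obj, (⟨j, j, 𝟙 j⟩ : Σ j j' : J₀, j ⟶ j') ∈ mor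
  comp_mem : ∀ (j₁ j₂ j₃ : J₀) (f : j₁ ⟶ j₂) (g : j₂ ⟶ j₃),
    (⟨j₁, j₂, f⟩ : Σ j j' : J₀, j ⟶ j') ∈ mor →
    (⟨j₂, j₃, g⟩ : Σ j j' : J₀, j ⟶ j') ∈ mor →
    (⟨j₁, j₃, f ≫ g⟩ : Σ j j' : J₀, j ⟶ j') ∈ mor
  smallO : Cardinal.mk obj < lam
  smallM : Cardinal.mk mor < lam

instance : Preorder (SubCat J₀ lam) where
  le S T := S.obj ⊆ T.obj ∧ S.mor ⊆ T.mor
  le_refl S := ⟨subset_rfl, subset_rfl⟩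
  le_trans S T U h h' := ⟨h.1.trans h'.1, h.2.trans h'.2⟩

section Closure

variable (Os : Set J₀) (Ms : Set (Σ j j' : J₀, j ⟶ j'))

def CVq (Os : Set J₀) (_Ms : Set (Σ j j' : J₀, j ⟶ j')) := ↥Os

instance cQuiver : Quiver.{v} (CVq Os Ms) :=
  ⟨fun a b => {m : ↥Ms // m.1.1 = a.1 ∧ m.1.2.1 = b.1}⟩

variable {Os Ms}

def edgeHom {a b : CVq Os Ms} (e : a ⟶ b) : ((a.1 : J₀) ⟶ b.1) :=
  eqToHom e.2.1.symm ≫ e.1.1.2.2 ≫ eqToHom e.2.2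

def evalPath : ∀ {a b : CVq Os Ms}, Quiver.Path a b → ((a.1 : J₀) ⟶ b.1)
  | _, _, .nil => 𝟙 _
  | _, _, .cons p e => evalPath p ≫ edgeHom e

lemma evalPath_comp {a b c : CVq Os Ms}
    (p : Quiver.Path a b) (p' : Quiver.Path b c) :
    evalPath (p.comp p') = evalPath p ≫ evalPath p' := by
  induction p' with
  | nil => simp [evalPath]
  | cons p'' e ih =>
    simp only [Quiver.Path.comp_cons]
    show evalPath (Quiver.Path.cons (p.comp p'') e) = _
    simp only [evalPath, ih, Category.assoc]

variable (Os Ms)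

def closure : Set (Σ j j' : J₀, j ⟶ j') :=
  Set.range (fun t : Σ a b : CVq Os Ms, Quiver.Path a b =>
    ⟨t.1.1, t.2.1.1, evalPath t.2.2⟩)

variable {Os Ms}

lemma base_subset_closure (hsrc : ∀ m ∈ Ms, m.1 ∈ Os) (htgt : ∀ m ∈ Ms, m.2.1 ∈ Os) :
    Ms ⊆ closure Os Ms := by
  rintro ⟨j, j', u⟩ hm
  refine ⟨⟨⟨j, hsrc _ hm⟩, ⟨j', htgt _ hm⟩,
    Quiver.Path.cons Quiver.Path.nil ⟨⟨⟨j, j', u⟩, hm⟩, rfl, rfl⟩⟩, ?_⟩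
  simp [evalPath, edgeHom]
  erw [evalPath.eq_2, evalPath.eq_1]
  simp [edgeHom]

lemma id_mem_closure {j : J₀} (hj : j ∈ Os) :
    (⟨j, j, 𝟙 j⟩ : Σ j j' : J₀, j ⟶ j') ∈ closure Os Ms := by
  refine ⟨⟨⟨j, hj⟩, ⟨j, hj⟩, Quiver.Path.nil⟩, ?_⟩
  simp [evalPath]
  exact evalPath.eq_1 _

lemma comp_mem_closure {j₁ j₂ j₃ : J₀} {f : j₁ ⟶ j₂} {g : j₂ ⟶ j₃}
    (hf : (⟨j₁, j₂, f⟩ : Σ j j' : J₀, j ⟶ j') ∈ closure Os Ms)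
    (hg : (⟨j₂, j₃, g⟩ : Σ j j' : J₀, j ⟶ j') ∈ closure Os Ms) :
    (⟨j₁, j₃, f ≫ g⟩ : Σ j j' : J₀, j ⟶ j') ∈ closure Os Ms := by
  obtain ⟨⟨a, b, p⟩, hfe⟩ := hf
  obtain ⟨⟨a', b', p'⟩, hge⟩ := hg
  obtain ⟨h1, hfe⟩ := Sigma.mk.inj_iff.mp hfe
  subst h1
  obtain ⟨h2, hfe⟩ := Sigma.mk.inj_iff.mp (eq_of_heq hfe)
  subst h2
  obtain ⟨h3, hge⟩ := Sigma.mk.inj_iff.mp hge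
  have hab : a' = b := Subtype.ext h3
  subst hab
  obtain ⟨h4, hge⟩ := Sigma.mk.inj_iff.mp (eq_of_heq hge)
  subst h4
  have hf' : evalPath p = f := eq_of_heq hfe
  have hg' : evalPath p' = g := eq_of_heq hge
  refine ⟨⟨a, b', p.comp p'⟩, ?_⟩
  show (⟨a.1, b'.1, evalPath (p.comp p')⟩ : Σ j j' : J₀, j ⟶ j') = ⟨a.1, b'.1, f ≫ g⟩
  rw [evalPath_comp, hf', hg']

lemma closure_small (hreg : lam.IsRegular) (hℵ : ℵ₀ < lam)
    (hO : #↥Os < lam) (hM : #↥Ms < lam) : #↥(closure Os Ms) < lam := by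
  refine lt_of_le_of_lt (Cardinal.mk_range_le) ?_
  letI := cQuiver Os Ms
  refine mk_paths_lt hreg hℵ hO ?_
  refine lt_of_le_of_lt (Cardinal.mk_le_of_injective
    (f := fun t : Σ a b : CVq Os Ms, a ⟶ b => (t.2.2.1 : ↥Ms)) ?_) hM
  rintro ⟨a, b, m, h1, h2⟩ ⟨a', b', m', h1', h2'⟩ h
  cases h
  have ha : a = a' := Subtype.ext (h1.symm.trans h1')
  have hb : b = b' := Subtype.ext (h2.symm.trans h2')
  subst ha; subst hb; rfl

/-- The closure is contained in any closed subcategory containing the generators. -/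
lemma closure_sub (T : SubCat J₀ lam) (hO : Os ⊆ T.obj) (hM : Ms ⊆ T.mor) :
    closure Os Ms ⊆ T.mor := by
  rintro m ⟨⟨a, b, p⟩, rfl⟩
  show (⟨a.1, b.1, evalPath p⟩ : Σ j j' : J₀, j ⟶ j') ∈ T.mor
  induction p with
  | nil =>
    simp only [evalPath]
    exact T.id_mem _ (hO a.2)
  | cons p' e ih =>
    simp only [evalPath]
    obtain ⟨⟨⟨x, y, w⟩, hmem⟩, h1, h2⟩ := e
    dsimp at h1 h2
    subst h1
    subst h2
    refine T.comp_mem _ _ _ _ _ ih ?_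
    have := hM hmem
    simpa [edgeHom] using this

def closSub (hreg : lam.IsRegular) (hℵ : ℵ₀ < lam) (hO : #↥Os < lam) (hM : #↥Ms < lam)
    (hsrc : ∀ m ∈ Ms, m.1 ∈ Os) (htgt : ∀ m ∈ Ms, m.2.1 ∈ Os) : SubCat J₀ lam where
  obj := Os
  mor := closure Os Ms
  src_mem := by rintro m ⟨⟨a, b, p⟩, rfl⟩; exact a.2
  tgt_mem := by rintro m ⟨⟨a, b, p⟩, rfl⟩; exact b.2
  id_mem := fun j hj => id_mem_closure hj
  comp_mem := fun _ _ _ _ _ hf hg => comp_mem_closure hf hg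
  smallO := hO
  smallM := closure_small hreg hℵ hO hM

end Closure

theorem filt_SubCat (hreg : lam.IsRegular) (hℵ : ℵ₀ < lam) :
    IsCardinalFilteredCat (SubCat J₀ lam) lam := by
  intro A instA hA F
  have hO : #↥(⋃ b : A, (F.obj b).obj) < lam :=
    lt_of_le_of_lt mk_iUnion_le_sum_mk
      (sum_lt_of_isRegular hreg hA.1 fun b => (F.obj b).smallO)
  have hM : #↥(⋃ b : A, (F.obj b).mor) < lam :=
    lt_of_le_of_lt mk_iUnion_le_sum_mk
      (sum_lt_of_isRegular hreg hA.1 fun b => (F.obj b).smallM)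
  have hsrc : ∀ m ∈ ⋃ b : A, (F.obj b).mor, m.1 ∈ ⋃ b : A, (F.obj b).obj := by
    intro m hm
    obtain ⟨b, hb⟩ := Set.mem_iUnion.mp hm
    exact Set.mem_iUnion.mpr ⟨b, (F.obj b).src_mem m hb⟩
  have htgt : ∀ m ∈ ⋃ b : A, (F.obj b).mor, m.2.1 ∈ ⋃ b : A, (F.obj b).obj := by
    intro m hm
    obtain ⟨b, hb⟩ := Set.mem_iUnion.mp hm
    exact Set.mem_iUnion.mpr ⟨b, (F.obj b).tgt_mem m hb⟩
  refine ⟨⟨closSub hreg hℵ hO hM hsrc htgt,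
    { app := fun b => homOfLE ⟨fun j hj => Set.mem_iUnion.mpr ⟨b, hj⟩,
        fun m hm => base_subset_closure hsrc htgt (Set.mem_iUnion.mpr ⟨b, hm⟩)⟩
      naturality := fun _ _ _ => Subsingleton.elim _ _ }⟩⟩

end SubCatSec

section Realize

open Cardinal

variable {C : Type u} [Category.{v} C] [HasColimitsOfSize.{v, v} C]
variable {J₀ : Type v} [SmallCategory J₀] (D₀ : J₀ ⥤ C)
variable {ι₀ : Type v} {G : ι₀ → C}
variable {lam : Cardinal.{v}} {W : Type v}

noncomputable def idx (hran : ∀ j, D₀.obj j ∈ Set.range G) (j : J₀) : ι₀ :=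
  (hran j).choose

lemma G_idx (hran : ∀ j, D₀.obj j ∈ Set.range G) (j : J₀) :
    G (idx D₀ hran j) = D₀.obj j :=
  (hran j).choose_spec

variable (hW : #W = lam)

noncomputable def embO (S : SubCat J₀ lam) : ↥S.obj ↪ W :=
  ((Cardinal.le_def _ _).mp (S.smallO.trans_eq hW.symm).le).some

noncomputable def embM (S : SubCat J₀ lam) : ↥S.mor ↪ W :=
  ((Cardinal.le_def _ _).mp (S.smallM.trans_eq hW.symm).le).some

noncomputable def eqO (S : SubCat J₀ lam) : ↥S.obj ≃ ↥(Set.range ⇑(embO hW S)) :=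
  Equiv.ofInjective _ (embO hW S).injective

noncomputable def eqM (S : SubCat J₀ lam) : ↥S.mor ≃ ↥(Set.range ⇑(embM hW S)) :=
  Equiv.ofInjective _ (embM hW S).injective

variable (hran : ∀ j, D₀.obj j ∈ Set.range G)

noncomputable def subQD (S : SubCat J₀ lam) : QD W ι₀ G lam where
  O := Set.range ⇑(embO hW S)
  E := Set.range ⇑(embM hW S)
  src e := eqO hW S ⟨((eqM hW S).symm e).1.1, S.src_mem _ ((eqM hW S).symm e).2⟩
  tgt e := eqO hW S ⟨((eqM hW S).symm e).1.2.1, S.tgt_mem _ ((eqM hW S).symm e).2⟩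
  Fo o := idx D₀ hran ((eqO hW S).symm o).1
  Fe e :=
    eqToHom (by simp only [Equiv.symm_apply_apply]; exact G_idx D₀ hran _) ≫
      D₀.map ((eqM hW S).symm e).1.2.2 ≫
      eqToHom (by simp only [Equiv.symm_apply_apply]; exact (G_idx D₀ hran _).symm)
  smallO := by rw [Cardinal.mk_range_eq _ (embO hW S).injective]; exact S.smallO
  smallE := by rw [Cardinal.mk_range_eq _ (embM hW S).injective]; exact S.smallM

lemma subQD_Fo (S : SubCat J₀ lam) (j : J₀) (hj : j ∈ S.obj) :
    (subQD D₀ hW hran S).Fo (eqO hW S ⟨j, hj⟩) = idx D₀ hran j := by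
  show idx D₀ hran ((eqO hW S).symm (eqO hW S ⟨j, hj⟩)).1 = idx D₀ hran j
  rw [Equiv.symm_apply_apply]

lemma xi_pf (S : SubCat J₀ lam) (j : J₀) (hj : j ∈ S.obj) :
    D₀.obj j = G ((subQD D₀ hW hran S).Fo (eqO hW S ⟨j, hj⟩)) := by
  rw [subQD_Fo]
  exact (G_idx D₀ hran j).symm

/-- The canonical map `D₀.obj j ⟶ colim (subQD S)` for `j ∈ S`. -/
noncomputable def xi (S : SubCat J₀ lam) (j : J₀) (hj : j ∈ S.obj) :
    D₀.obj j ⟶ (subQD D₀ hW hran S).colim :=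
  eqToHom (xi_pf D₀ hW hran S j hj) ≫ QD.ci (subQD D₀ hW hran S) (eqO hW S ⟨j, hj⟩)

lemma xi_hom_ext (S : SubCat J₀ lam) {Z : C} {f g : (subQD D₀ hW hran S).colim ⟶ Z}
    (h : ∀ j hj, xi D₀ hW hran S j hj ≫ f = xi D₀ hW hran S j hj ≫ g) : f = g := by
  apply QD.chom_ext
  intro o
  obtain ⟨⟨j, hj⟩, rfl⟩ := (eqO hW S).surjective o
  have h' := h j hj
  simp only [xi, Category.assoc] at h'
  exact (cancel_epi (eqToHom (xi_pf D₀ hW hran S j hj))).mp h'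

lemma subQD_Fo' (S : SubCat J₀ lam) (x : ↥S.obj) :
    (subQD D₀ hW hran S).Fo (eqO hW S x) = idx D₀ hran x.1 := by
  show idx D₀ hran ((eqO hW S).symm (eqO hW S x)).1 = idx D₀ hran x.1
  rw [Equiv.symm_apply_apply]

lemma xi_pf' (S : SubCat J₀ lam) (x : ↥S.obj) :
    D₀.obj x.1 = G ((subQD D₀ hW hran S).Fo (eqO hW S x)) := by
  rw [subQD_Fo']
  exact (G_idx D₀ hran x.1).symm

lemma val_rt (S : SubCat J₀ lam) (x : ↥S.mor) :
    (((eqM hW S).symm (eqM hW S x) : ↥S.mor) : Σ a b : J₀, a ⟶ b) = x.1 := by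
  rw [Equiv.symm_apply_apply]

lemma map_congr {m m' : Σ a b : J₀, a ⟶ b} (h : m = m') :
    D₀.map m.2.2 = eqToHom (by rw [h]) ≫ D₀.map m'.2.2 ≫ eqToHom (by rw [h]) := by
  subst h; simp

lemma subQD_src (S : SubCat J₀ lam) {j j' : J₀} (u : j ⟶ j')
    (hm : (⟨j, j', u⟩ : Σ a b : J₀, a ⟶ b) ∈ S.mor) :
    (subQD D₀ hW hran S).src (eqM hW S ⟨⟨j, j', u⟩, hm⟩) =
      eqO hW S ⟨j, S.src_mem _ hm⟩ := by
  show eqO hW S ⟨(((eqM hW S).symm (eqM hW S ⟨⟨j, j', u⟩, hm⟩) : ↥S.mor) :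
      Σ a b : J₀, a ⟶ b).1, _⟩ = _
  apply congrArg
  apply Subtype.ext
  exact congrArg Sigma.fst (val_rt hW S ⟨⟨j, j', u⟩, hm⟩)

lemma subQD_tgt (S : SubCat J₀ lam) {j j' : J₀} (u : j ⟶ j')
    (hm : (⟨j, j', u⟩ : Σ a b : J₀, a ⟶ b) ∈ S.mor) :
    (subQD D₀ hW hran S).tgt (eqM hW S ⟨⟨j, j', u⟩, hm⟩) =
      eqO hW S ⟨j', S.tgt_mem _ hm⟩ := by
  show eqO hW S ⟨(((eqM hW S).symm (eqM hW S ⟨⟨j, j', u⟩, hm⟩) : ↥S.mor) :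
      Σ a b : J₀, a ⟶ b).2.1, _⟩ = _
  apply congrArg
  apply Subtype.ext
  exact congrArg (fun m => m.2.1) (val_rt hW S ⟨⟨j, j', u⟩, hm⟩)

lemma subQD_Fe (S : SubCat J₀ lam) {j j' : J₀} (u : j ⟶ j')
    (hm : (⟨j, j', u⟩ : Σ a b : J₀, a ⟶ b) ∈ S.mor) :
    (subQD D₀ hW hran S).Fe (eqM hW S ⟨⟨j, j', u⟩, hm⟩) =
      eqToHom (by rw [subQD_src D₀ hW hran S u hm, subQD_Fo']; exact G_idx D₀ hran j) ≫
        D₀.map u ≫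
        eqToHom (by rw [subQD_tgt D₀ hW hran S u hm, subQD_Fo']; exact (G_idx D₀ hran j').symm) := by
  show eqToHom _ ≫ D₀.map (((eqM hW S).symm (eqM hW S ⟨⟨j, j', u⟩, hm⟩) : ↥S.mor) :
      Σ a b : J₀, a ⟶ b).2.2 ≫ eqToHom _ = _
  rw [map_congr D₀ (val_rt hW S ⟨⟨j, j', u⟩, hm⟩)]
  simp
  rfl

lemma xi_w (S : SubCat J₀ lam) {j j' : J₀} (u : j ⟶ j')
    (hm : (⟨j, j', u⟩ : Σ a b : J₀, a ⟶ b) ∈ S.mor) :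
    D₀.map u ≫ xi D₀ hW hran S j' (S.tgt_mem _ hm) = xi D₀ hW hran S j (S.src_mem _ hm) := by
  have h := QD.fe_w (subQD D₀ hW hran S) (eqM hW S ⟨⟨j, j', u⟩, hm⟩)
  rw [subQD_Fe D₀ hW hran S u hm,
    QD.ci_congr _ (subQD_tgt D₀ hW hran S u hm),
    QD.ci_congr _ (subQD_src D₀ hW hran S u hm)] at h
  simp only [Category.assoc] at h
  rw [eqToHom_comp_iff] at h
  simp only [eqToHom_trans_assoc] at h
  show D₀.map u ≫ (eqToHom (xi_pf D₀ hW hran S j' (S.tgt_mem _ hm)) ≫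
      QD.ci (subQD D₀ hW hran S) (eqO hW S ⟨j', S.tgt_mem _ hm⟩)) =
    eqToHom (xi_pf D₀ hW hran S j (S.src_mem _ hm)) ≫
      QD.ci (subQD D₀ hW hran S) (eqO hW S ⟨j, S.src_mem _ hm⟩)
  exact h

/-- The legs of the descent cocone. -/
noncomputable def lamD (S : SubCat J₀ lam) {Z : C} (ℓ : ∀ j, j ∈ S.obj → (D₀.obj j ⟶ Z)) :
    ∀ o : ↥(subQD D₀ hW hran S).O, G ((subQD D₀ hW hran S).Fo o) ⟶ Z := fun o =>
  eqToHom (G_idx D₀ hran ((eqO hW S).symm o).1) ≫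
    ℓ ((eqO hW S).symm o).1 ((eqO hW S).symm o).2

lemma lamD_congr (S : SubCat J₀ lam) {Z : C} (ℓ : ∀ j, j ∈ S.obj → (D₀.obj j ⟶ Z))
    {o o' : ↥(subQD D₀ hW hran S).O} (h : o = o') :
    lamD D₀ hW hran S ℓ o = eqToHom (by rw [h]) ≫ lamD D₀ hW hran S ℓ o' := by
  subst h; simp

lemma lamD_eqO (S : SubCat J₀ lam) {Z : C} (ℓ : ∀ j, j ∈ S.obj → (D₀.obj j ⟶ Z))
    (x : ↥S.obj) :
    lamD D₀ hW hran S ℓ (eqO hW S x) =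
      eqToHom ((xi_pf' D₀ hW hran S x).symm) ≫ ℓ x.1 x.2 := by
  have hrt : (eqO hW S).symm (eqO hW S x) = x := Equiv.symm_apply_apply _ _
  have hcong : ∀ (y y' : ↥S.obj) (h : y = y'),
      (eqToHom (G_idx D₀ hran y.1) ≫ ℓ y.1 y.2 :
        G (idx D₀ hran y.1) ⟶ Z) = eqToHom (by rw [h]) ≫
          eqToHom (G_idx D₀ hran y'.1) ≫ ℓ y'.1 y'.2 := by
    intro y y' h; subst h; simp
  show (eqToHom (G_idx D₀ hran ((eqO hW S).symm (eqO hW S x)).1) ≫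
      ℓ ((eqO hW S).symm (eqO hW S x)).1 ((eqO hW S).symm (eqO hW S x)).2 :
      G (idx D₀ hran ((eqO hW S).symm (eqO hW S x)).1) ⟶ Z) = _
  rw [hcong _ x hrt]
  simp only [eqToHom_trans_assoc]
  rfl

noncomputable def xdesc (S : SubCat J₀ lam) {Z : C}
    (ℓ : ∀ j, j ∈ S.obj → (D₀.obj j ⟶ Z))
    (hnat : ∀ (j j' : J₀) (u : j ⟶ j') (hm : (⟨j, j', u⟩ : Σ a b : J₀, a ⟶ b) ∈ S.mor),
      D₀.map u ≫ ℓ j' (S.tgt_mem _ hm) = ℓ j (S.src_mem _ hm)) :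
    (subQD D₀ hW hran S).colim ⟶ Z :=
  QD.cdesc (subQD D₀ hW hran S) (lamD D₀ hW hran S ℓ)
    (by
      intro e
      obtain ⟨⟨⟨j, j', u⟩, hm⟩, rfl⟩ := (eqM hW S).surjective e
      rw [subQD_Fe D₀ hW hran S u hm,
        lamD_congr D₀ hW hran S ℓ (subQD_tgt D₀ hW hran S u hm),
        lamD_congr D₀ hW hran S ℓ (subQD_src D₀ hW hran S u hm),
        lamD_eqO D₀ hW hran S ℓ ⟨j', S.tgt_mem _ hm⟩,
        lamD_eqO D₀ hW hran S ℓ ⟨j, S.src_mem _ hm⟩]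
      dsimp only
      rw [← hnat j j' u hm]
      simp)

lemma xi_xdesc (S : SubCat J₀ lam) {Z : C} (ℓ : ∀ j, j ∈ S.obj → (D₀.obj j ⟶ Z))
    (hnat) (j : J₀) (hj : j ∈ S.obj) :
    xi D₀ hW hran S j hj ≫ xdesc D₀ hW hran S ℓ hnat = ℓ j hj := by
  show (eqToHom (xi_pf D₀ hW hran S j hj) ≫
      QD.ci (subQD D₀ hW hran S) (eqO hW S ⟨j, hj⟩)) ≫
    QD.cdesc (subQD D₀ hW hran S) _ _ = ℓ j hj
  erw [Category.assoc, QD.ci_cdesc]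
  rw [lamD_eqO D₀ hW hran S ℓ ⟨j, hj⟩]
  simp

-- singleton and pair subcategories
variable (hreg : lam.IsRegular) (hℵ : Cardinal.aleph0 < lam)

noncomputable def singS (j : J₀) : SubCat J₀ lam :=
  closSub hreg hℵ (Os := {j}) (Ms := ∅)
    (by rw [Cardinal.mk_fintype]; simpa using lt_of_lt_of_le Cardinal.one_lt_aleph0 hℵ.le)
    (by simp [Cardinal.mk_emptyCollection]; exact hreg.pos)
    (fun m hm => (Set.notMem_empty m hm).elim)
    (fun m hm => (Set.notMem_empty m hm).elim)

lemma singS_obj (j : J₀) : (singS (lam := lam) hreg hℵ j).obj = {j} := rfl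

lemma mem_singS (j : J₀) : j ∈ (singS (lam := lam) hreg hℵ j).obj := Set.mem_singleton j

lemma singS_le (S : SubCat J₀ lam) {j : J₀} (hj : j ∈ S.obj) :
    singS hreg hℵ j ≤ S :=
  ⟨Set.singleton_subset_iff.mpr hj,
    closure_sub S (Set.singleton_subset_iff.mpr hj) (Set.empty_subset _)⟩

noncomputable def pairS {j j' : J₀} (u : j ⟶ j') : SubCat J₀ lam :=
  closSub hreg hℵ (Os := {j, j'}) (Ms := {⟨j, j', u⟩})
    (lt_of_le_of_lt (Cardinal.mk_insert_le)
      (by rw [Cardinal.mk_singleton]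
          exact lt_of_lt_of_le (Cardinal.add_lt_aleph0 Cardinal.one_lt_aleph0 Cardinal.one_lt_aleph0) hℵ.le))
    (by rw [Cardinal.mk_singleton]; exact lt_of_lt_of_le Cardinal.one_lt_aleph0 hℵ.le)
    (by rintro m hm
        rw [Set.mem_singleton_iff] at hm
        subst hm
        exact Set.mem_insert _ _)
    (by rintro m hm
        rw [Set.mem_singleton_iff] at hm
        subst hm
        exact Set.mem_insert_iff.mpr (Or.inr rfl))

lemma mem_pairS_l {j j' : J₀} (u : j ⟶ j') :
    j ∈ (pairS (lam := lam) hreg hℵ u).obj := Set.mem_insert _ _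

lemma mem_pairS_r {j j' : J₀} (u : j ⟶ j') :
    j' ∈ (pairS (lam := lam) hreg hℵ u).obj := Set.mem_insert_iff.mpr (Or.inr rfl)

lemma mem_pairS_mor {j j' : J₀} (u : j ⟶ j') :
    (⟨j, j', u⟩ : Σ a b : J₀, a ⟶ b) ∈ (pairS (lam := lam) hreg hℵ u).mor :=
  base_subset_closure
    (by rintro m hm
        rw [Set.mem_singleton_iff] at hm
        subst hm
        exact Set.mem_insert _ _)
    (by rintro m hm
        rw [Set.mem_singleton_iff] at hm
        subst hm
        exact Set.mem_insert_iff.mpr (Or.inr rfl))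
    (Set.mem_singleton _)

/-- The canonical functor from the poset of small subcategories. -/
noncomputable def PsiF : SubCat J₀ lam ⥤ C where
  obj S := (subQD D₀ hW hran S).colim
  map {S T} f := xdesc D₀ hW hran S (fun j hj => xi D₀ hW hran T j ((leOfHom f).1 hj))
    (fun j j' u hm => xi_w D₀ hW hran T u ((leOfHom f).2 hm))
  map_id S := by
    apply xi_hom_ext
    intro j hj
    rw [xi_xdesc, Category.comp_id]
  map_comp {S T U} f g := by
    apply xi_hom_ext
    intro j hj
    rw [xi_xdesc, ← Category.assoc, xi_xdesc, xi_xdesc]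

lemma xi_PsiF_map {S T : SubCat J₀ lam} (f : S ⟶ T) (j : J₀) (hj : j ∈ S.obj) :
    xi D₀ hW hran S j hj ≫ (PsiF D₀ hW hran).map f =
      xi D₀ hW hran T j ((leOfHom f).1 hj) :=
  xi_xdesc D₀ hW hran S (fun j hj => xi D₀ hW hran T j ((leOfHom f).1 hj))
    (fun j j' u hm => xi_w D₀ hW hran T u ((leOfHom f).2 hm)) j hj

lemma xi_PsiF_map_assoc {S T : SubCat J₀ lam} (f : S ⟶ T) (j : J₀) (hj : j ∈ S.obj)
    {Z : C} (h : (PsiF (lam := lam) (W := W) D₀ hW hran).obj T ⟶ Z) :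
    xi D₀ hW hran S j hj ≫ (PsiF D₀ hW hran).map f ≫ h =
      xi D₀ hW hran T j ((leOfHom f).1 hj) ≫ h := by
  erw [← Category.assoc, xi_PsiF_map]
  rfl

variable (cc₀ : Cocone D₀)

/-- The canonical cocone over `PsiF` with apex `cc₀.pt`. -/
noncomputable def ccPF : Cocone (PsiF (lam := lam) (W := W) D₀ hW hran) where
  pt := cc₀.pt
  ι :=
    { app := fun S => xdesc D₀ hW hran S (fun j _ => cc₀.ι.app j)
        (fun j j' u _ => cc₀.w u)
      naturality := by
        intro S T f
        show (PsiF D₀ hW hran).map f ≫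
            xdesc D₀ hW hran T (fun j _ => cc₀.ι.app j) (fun j j' u _ => cc₀.w u) =
          xdesc D₀ hW hran S (fun j _ => cc₀.ι.app j) (fun j j' u _ => cc₀.w u) ≫ 𝟙 cc₀.pt
        rw [Category.comp_id]
        apply xi_hom_ext
        intro j hj
        erw [xi_PsiF_map_assoc, xi_xdesc, xi_xdesc] }

lemma xi_ccPF (S : SubCat J₀ lam) (j : J₀) (hj : j ∈ S.obj) :
    xi D₀ hW hran S j hj ≫ (ccPF D₀ hW hran cc₀).ι.app S = cc₀.ι.app j :=
  xi_xdesc D₀ hW hran S (fun j _ => cc₀.ι.app j) (fun j j' u _ => cc₀.w u) j hj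

variable (hreg : lam.IsRegular) (hℵ : Cardinal.aleph0 < lam)

set_option maxHeartbeats 1600000 in
noncomputable def isColimit_ccPF (hcolim₀ : IsColimit cc₀) :
    IsColimit (ccPF (lam := lam) (W := W) D₀ hW hran cc₀) := by
  have legnat : ∀ (s : Cocone (PsiF (lam := lam) (W := W) D₀ hW hran)) {j j₂ : J₀} (u : j ⟶ j₂),
      D₀.map u ≫ (xi D₀ hW hran (singS hreg hℵ j₂) j₂ (mem_singS hreg hℵ j₂) ≫
        s.ι.app (singS hreg hℵ j₂)) =
      xi D₀ hW hran (singS hreg hℵ j) j (mem_singS hreg hℵ j) ≫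
        s.ι.app (singS hreg hℵ j) := by
    intro s j j₂ u
    have h2 : s.ι.app (singS hreg hℵ j₂) =
        (PsiF D₀ hW hran).map (homOfLE (singS_le hreg hℵ (pairS hreg hℵ u) (mem_pairS_r hreg hℵ u))) ≫
          s.ι.app (pairS hreg hℵ u) := by
      rw [s.w]
    have h1 : s.ι.app (singS hreg hℵ j) =
        (PsiF D₀ hW hran).map (homOfLE (singS_le hreg hℵ (pairS hreg hℵ u) (mem_pairS_l hreg hℵ u))) ≫
          s.ι.app (pairS hreg hℵ u) := by
      rw [s.w]
    erw [h1, h2, xi_PsiF_map_assoc, xi_PsiF_map_assoc, ← Category.assoc]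
    congr 1
    exact xi_w D₀ hW hran _ u (mem_pairS_mor hreg hℵ u)
  refine
    { desc := fun s => hcolim₀.desc
        ⟨s.pt,
          { app := fun j => xi D₀ hW hran (singS hreg hℵ j) j (mem_singS hreg hℵ j) ≫
              s.ι.app (singS hreg hℵ j)
            naturality := fun j j₂ u => by
              simp only [Functor.const_obj_map, Functor.const_obj_obj, Category.comp_id]
              exact legnat s u }⟩
      fac := ?_
      uniq := ?_ }
  · intro s S
    apply xi_hom_ext
    intro j hj
    erw [← Category.assoc, xi_ccPF, hcolim₀.fac]
    show xi D₀ hW hran (singS hreg hℵ j) j (mem_singS hreg hℵ j) ≫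
      s.ι.app (singS hreg hℵ j) = xi D₀ hW hran S j hj ≫ s.ι.app S
    rw [show s.ι.app (singS hreg hℵ j) =
        (PsiF D₀ hW hran).map (homOfLE (singS_le hreg hℵ S hj)) ≫ s.ι.app S from
        (s.w (homOfLE (singS_le hreg hℵ S hj))).symm]
    erw [xi_PsiF_map_assoc]
  · intro s m hm
    apply hcolim₀.hom_ext
    intro j
    rw [hcolim₀.fac]
    show cc₀.ι.app j ≫ m = xi D₀ hW hran (singS hreg hℵ j) j (mem_singS hreg hℵ j) ≫
      s.ι.app (singS hreg hℵ j)
    erw [← xi_ccPF D₀ hW hran cc₀ (singS hreg hℵ j) j (mem_singS hreg hℵ j),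
      Category.assoc, hm]

end Realize

section Transfer

variable {C : Type u} {D' : Type u'} [Category.{v} C] [Category.{v} D']

/-- Presentability transfers along a reflection whose right adjoint preserves
`lam`-filtered colimits. -/
lemma pres_reflect (i : D' ⥤ C) (L : C ⥤ D') (adj : L ⊣ i) {lam : Cardinal.{v}}
    (hpres : ∀ (J : Type v) [SmallCategory J], IsCardinalFilteredCat J lam →
      Nonempty (PreservesColimitsOfShape J i))
    {c : C} (hc : IsCardinalPresentableObj c lam) :
    IsCardinalPresentableObj (L.obj c) lam := by
  intro J instJ hJ E cc hcc'
  obtain ⟨hcc⟩ := hcc'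
  obtain ⟨hp⟩ := hpres J hJ
  have hicc : IsColimit (i.mapCocone cc) := isColimitOfPreserves i hcc
  obtain ⟨hty⟩ := hc J hJ (E ⋙ i) (i.mapCocone cc) ⟨hicc⟩
  have hty2 : IsColimit ((i ⋙ coyoneda.obj (Opposite.op c)).mapCocone cc) := hty
  refine ⟨?_⟩
  have N : (i ⋙ coyoneda.obj (Opposite.op c) : D' ⥤ Type v) ≅
      coyoneda.obj (Opposite.op (L.obj c)) := by
    refine NatIso.ofComponents (fun X => Equiv.toIso (adj.homEquiv c X).symm) ?_
    intro X Y f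
    ext g
    show (adj.homEquiv c Y).symm (g ≫ i.map f) = (adj.homEquiv c X).symm g ≫ f
    rw [Adjunction.homEquiv_naturality_right_symm]
  exact IsColimit.mapCoconeEquiv N hty2

end Transfer

end LPAux


/-- Let `C` be a locally presentable category and `D ⊆ C` a reflective full subcategory
(witnessed by a fully faithful inclusion functor `i : D ⥤ C` with a left adjoint) such
that the inclusion preserves `κ`-filtered colimits for some regular cardinal `κ`.
Then `D` is locally presentable. -/
theorem isLocallyPresentable_of_reflective {C : Type u} {D : Type u'}
    [Category.{v} C] [Category.{v} D] (hC : IsLocallyPresentableCat C)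
    (i : D ⥤ C) [Reflective i] (κ : Cardinal.{v}) (hκ : κ.IsRegular)
    (hpres : ∀ (J : Type v) [SmallCategory J], IsCardinalFilteredCat J κ →
      Nonempty (PreservesColimitsOfShape J i)) :
    IsLocallyPresentableCat D := by
  open LPAux Cardinal in
  obtain ⟨hcolC, κ₀, hκ₀, ι₀, G, hGpres, hGgen⟩ := hC
  haveI := hcolC
  have hcolD : HasColimitsOfSize.{v, v} D := hasColimits_of_reflective i
  set lam : Cardinal.{v} := Order.succ (max κ κ₀) with hlam
  have hmax : ℵ₀ ≤ max κ κ₀ := le_trans hκ.aleph0_le (le_max_left _ _)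
  have hreg : lam.IsRegular := Cardinal.isRegular_succ hmax
  have hℵ : ℵ₀ < lam := lt_of_le_of_lt hmax (Order.lt_succ_of_not_isMax (not_isMax _))
  have hκlam : κ ≤ lam := (le_max_left _ κ₀).trans (Order.le_succ _)
  have hκ₀lam : κ₀ ≤ lam := (le_max_right κ _).trans (Order.le_succ _)
  set W : Type v := lam.out with hWdef
  have hW : #W = lam := Cardinal.mk_out lam
  set L : C ⥤ D := reflector i with hL
  have adj : L ⊣ i := reflectorAdjunction i
  have hpres' : ∀ (J : Type v) [SmallCategory J], IsCardinalFilteredCat J lam →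
      Nonempty (PreservesColimitsOfShape J i) := fun J _ hJ => hpres J (filt_anti hκlam hJ)
  refine ⟨hcolD, lam, hreg, QD W ι₀ G lam, (fun q => L.obj (QD.colim q)), ?_, ?_⟩
  · intro q
    exact pres_reflect i L adj hpres'
      (QD.pres q hreg hℵ (fun i' => pres_mono hκ₀lam (hGpres i')))
  · intro X
    obtain ⟨J₀c, D₀, cc₀, hfil₀, hran₀, ⟨hcol₀⟩, ⟨e₀⟩⟩ := hGgen (i.obj X)
    haveI : PreservesColimitsOfSize.{v, v} L := adj.leftAdjoint_preservesColimits
    refine ⟨Cat.of (SubCat J₀c lam), PsiF D₀ hW hran₀ ⋙ L,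
      L.mapCocone (ccPF D₀ hW hran₀ cc₀), ?_, ?_, ?_, ?_⟩
    · exact filt_SubCat hreg hℵ
    · intro S
      exact ⟨subQD D₀ hW hran₀ S, rfl⟩
    · haveI : PreservesColimit (PsiF D₀ hW hran₀) L :=
        (PreservesColimitsOfSize.preservesColimitsOfShape (F := L)).preservesColimit
      exact ⟨@isColimitOfPreserves _ _ _ _ _ _ _ L _ (isColimit_ccPF D₀ hW hran₀ cc₀ hreg hℵ hcol₀) this⟩
    · exact ⟨(L.mapIso e₀).trans (asIso (adj.counit.app X))⟩
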